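/- Let n be an odd positive integer, let p_1, ..., p_n be distinct positive real numbers, let c_1, ..., c_n be real numbers not all zero, and let r be a real number with r > n − 1. Then the function f on (0,∞) defined by f(x) = Σ_{j=1}^n c_j (x^r + p_j^r)/(x + p_j) has at most n − 1 zeros in (0,∞). -/

import Mathlib

open List

/-- An alternating chain: strictly descending list of indices with consecutive
products negative. -/
def IsAlt (a : ℕ → ℝ) (l : List ℕ) : Prop :=
  List.IsChain (· > ·) l ∧ List.IsChain (fun i j => a i * a j < 0) l

lemma desc_len : ∀ (l : List ℕ) (m : ℕ), l.IsChain (· > ·) → (∀ x ∈ l, x < m) →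
    l.length ≤ m := by
  intro l
  induction l with
  | nil => intro m _ _; simp
  | cons x t ih =>
    intro m hc hb
    have hxm : x < m := hb x (List.mem_cons_self)
    have hpw := (List.isChain_iff_pairwise.mp hc)
    have ht : ∀ y ∈ t, y < x := by
      intro y hy
      exact (List.pairwise_cons.mp hpw).1 y hy
    have := ih x hc.tail ht
    simp only [List.length_cons]; omega

lemma isAlt_twist_twist (a : ℕ → ℝ) :
    (fun k => (-1 : ℝ)^k * ((-1 : ℝ)^k * a k)) = a := by
  funext k
  rw [← mul_assoc, ← pow_add]
  rw [Even.neg_one_pow ⟨k, by ring⟩, one_mul]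

lemma lt_of_desc_cons {x : ℕ} {t : List ℕ} (h : List.IsChain (· > ·) (x :: t)) :
    ∀ y ∈ t, y < x := by
  intro y hy
  exact (List.pairwise_cons.mp (List.isChain_iff_pairwise.mp h)).1 y hy

lemma two_chain_aux (m : ℕ)
    (IH : ∀ m' < m, ∀ (a : ℕ → ℝ) (l₁ l₂ : List ℕ), IsAlt a l₁ →
      IsAlt (fun k => (-1 : ℝ)^k * a k) l₂ → (∀ x ∈ l₁, x < m') → (∀ x ∈ l₂, x < m') →
      l₁.length + l₂.length ≤ m' + 1)
    (a : ℕ → ℝ) (i j : ℕ) (s₁ s₂ : List ℕ)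
    (h₁ : IsAlt a ((m-1) :: i :: s₁))
    (h₂ : IsAlt (fun k => (-1 : ℝ)^k * a k) ((m-1) :: j :: s₂))
    (hb₁ : ∀ x ∈ (m-1) :: i :: s₁, x < m) (hb₂ : ∀ x ∈ (m-1) :: j :: s₂, x < m)
    (hji : j ≤ i) (hm : 1 ≤ m) :
    ((m-1) :: i :: s₁).length + ((m-1) :: j :: s₂).length ≤ m + 1 := by
  set b : ℕ → ℝ := fun k => (-1 : ℝ)^k * a k with hb
  obtain ⟨hd₁, ha₁⟩ := h₁
  obtain ⟨hd₂, ha₂⟩ := h₂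
  have him : i < m - 1 := (List.isChain_cons_cons.mp hd₁).1
  have hjm : j < m - 1 := (List.isChain_cons_cons.mp hd₂).1
  have hai : a (m-1) * a i < 0 := (List.isChain_cons_cons.mp ha₁).1
  have haj : b (m-1) * b j < 0 := (List.isChain_cons_cons.mp ha₂).1
  have hbj : b j ≠ 0 := by intro h; rw [h, mul_zero] at haj; exact lt_irrefl _ haj
  have hbi : b i ≠ 0 := by
    have : a i ≠ 0 := by intro h; rw [h, mul_zero] at hai; exact lt_irrefl _ hai
    simp only [hb]
    exact mul_ne_zero (pow_ne_zero _ (by norm_num)) this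
  by_cases hcase : j < i ∧ b j * b i < 0
  · -- reroute the b-chain's head to i
    obtain ⟨hji', hneg⟩ := hcase
    have hch2 : IsAlt b (i :: j :: s₂) := by
      constructor
      · exact List.isChain_cons_cons.mpr ⟨hji', (List.isChain_cons_cons.mp hd₂).2⟩
      · exact List.isChain_cons_cons.mpr ⟨by linarith [mul_comm (b j) (b i)] , (List.isChain_cons_cons.mp ha₂).2⟩
    have hch1 : IsAlt a (i :: s₁) := ⟨hd₁.tail, ha₁.tail⟩
    have hlt1 : ∀ x ∈ i :: s₁, x < i + 1 := by
      intro x hx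
      rcases List.mem_cons.mp hx with rfl | hx
      · omega
      · have := lt_of_desc_cons hd₁.tail x hx; omega
    have hlt2 : ∀ x ∈ i :: j :: s₂, x < i + 1 := by
      intro x hx
      rcases List.mem_cons.mp hx with rfl | hx
      · omega
      rcases List.mem_cons.mp hx with rfl | hx
      · omega
      · have := lt_of_desc_cons hd₂.tail x hx; omega
    have := IH (i+1) (by omega) a (i :: s₁) (i :: j :: s₂) hch1 hch2 hlt1 hlt2
    simp only [List.length_cons] at this ⊢
    omega
  · -- parity argument
    have hbim : b (m-1) * b i < 0 := by
      rcases eq_or_lt_of_le hji with rfl | hji'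
      · exact haj
      · have h0 : ¬ (b j * b i < 0) := fun h => hcase ⟨hji', h⟩
        have h1 : 0 < b j * b i := lt_of_le_of_ne (not_lt.mp h0)
          (by symm; exact mul_ne_zero hbj hbi)
        nlinarith [mul_self_nonneg (b j)]
    -- b (m-1) * b i = (-1)^(m-1+i) * (a (m-1) * a i)
    have hpar : Even (m - 1 + i) := by
      rcases Nat.even_or_odd (m - 1 + i) with h | h
      · exact h
      · exfalso
        have : b (m-1) * b i = (-1 : ℝ)^(m-1+i) * (a (m-1) * a i) := by
          simp [hb, pow_add]; ring
        rw [this, h.neg_one_pow] at hbim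
        nlinarith
    have hi3 : i + 3 ≤ m := by
      obtain ⟨t, ht⟩ := hpar
      omega
    have hch1 : IsAlt a (i :: s₁) := ⟨hd₁.tail, ha₁.tail⟩
    have hch2 : IsAlt b (j :: s₂) := ⟨hd₂.tail, ha₂.tail⟩
    have hlt1 : ∀ x ∈ i :: s₁, x < i + 1 := by
      intro x hx
      rcases List.mem_cons.mp hx with rfl | hx
      · omega
      · have := lt_of_desc_cons hd₁.tail x hx; omega
    have hlt2 : ∀ x ∈ j :: s₂, x < i + 1 := by
      intro x hx
      rcases List.mem_cons.mp hx with rfl | hx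
      · omega
      · have := lt_of_desc_cons hd₂.tail x hx; omega
    have := IH (i+1) (by omega) a (i :: s₁) (j :: s₂) hch1 hch2 hlt1 hlt2
    simp only [List.length_cons] at this ⊢
    omega

lemma two_chain : ∀ (m : ℕ) (a : ℕ → ℝ) (l₁ l₂ : List ℕ), IsAlt a l₁ →
    IsAlt (fun k => (-1 : ℝ)^k * a k) l₂ → (∀ x ∈ l₁, x < m) → (∀ x ∈ l₂, x < m) →
    l₁.length + l₂.length ≤ m + 1 := by
  intro m
  induction m using Nat.strong_induction_on with
  | _ m IH =>
    intro a l₁ l₂ h₁ h₂ hb₁ hb₂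
    rcases l₁ with _ | ⟨x₁, t₁⟩
    · have := desc_len l₂ m h₂.1 hb₂
      simp only [List.length_nil]
      omega
    rcases l₂ with _ | ⟨x₂, t₂⟩
    · have := desc_len (x₁ :: t₁) m h₁.1 hb₁
      simp only [List.length_nil]
      omega
    have hm : 1 ≤ m := by
      have := hb₁ x₁ (List.mem_cons_self); omega
    have hx₁ : x₁ ≤ m - 1 := by have := hb₁ x₁ (List.mem_cons_self); omega
    have hx₂ : x₂ ≤ m - 1 := by have := hb₂ x₂ (List.mem_cons_self); omega
    rcases eq_or_lt_of_le hx₁ with he₁ | hl₁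
    · subst he₁
      rcases eq_or_lt_of_le hx₂ with he₂ | hl₂
      · subst he₂
        rcases t₁ with _ | ⟨i, s₁⟩
        · have := desc_len ((m-1) :: t₂) m h₂.1 hb₂
          simp only [List.length_cons, List.length_nil] at this ⊢
          omega
        rcases t₂ with _ | ⟨j, s₂⟩
        · have := desc_len ((m-1) :: i :: s₁) m h₁.1 hb₁
          simp only [List.length_cons, List.length_nil] at this ⊢
          omega
        rcases le_or_gt j i with hji | hij
        · exact two_chain_aux m IH a i j s₁ s₂ h₁ h₂ hb₁ hb₂ hji hm
        · have h₁' : IsAlt (fun k => (-1 : ℝ)^k *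
              ((fun k => (-1 : ℝ)^k * a k) k)) ((m-1) :: i :: s₁) := by
            rw [isAlt_twist_twist]; exact h₁
          have := two_chain_aux m IH (fun k => (-1 : ℝ)^k * a k) j i s₂ s₁
            h₂ h₁' hb₂ hb₁ (le_of_lt hij) hm
          omega
      · -- x₂ < m - 1 : drop the head of l₁
        have hch1 : IsAlt a t₁ := ⟨h₁.1.tail, h₁.2.tail⟩
        have hlt1 : ∀ x ∈ t₁, x < m - 1 := by
          intro x hx; have := lt_of_desc_cons h₁.1 x hx; omega
        have hlt2 : ∀ x ∈ x₂ :: t₂, x < m - 1 := by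
          intro x hx
          rcases List.mem_cons.mp hx with rfl | hx
          · omega
          · have := lt_of_desc_cons h₂.1 x hx; omega
        have := IH (m-1) (by omega) a t₁ (x₂ :: t₂) hch1 h₂ hlt1 hlt2
        simp only [List.length_cons] at this ⊢
        omega
    · rcases eq_or_lt_of_le hx₂ with he₂ | hl₂
      · subst he₂
        have hlt1 : ∀ x ∈ x₁ :: t₁, x < m - 1 := by
          intro x hx
          rcases List.mem_cons.mp hx with rfl | hx
          · omega
          · have := lt_of_desc_cons h₁.1 x hx; omega
        have hch2 : IsAlt (fun k => (-1 : ℝ)^k * a k) t₂ := ⟨h₂.1.tail, h₂.2.tail⟩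
        have hlt2 : ∀ x ∈ t₂, x < m - 1 := by
          intro x hx; have := lt_of_desc_cons h₂.1 x hx; omega
        have := IH (m-1) (by omega) a (x₁ :: t₁) t₂ h₁ hch2 hlt1 hlt2
        simp only [List.length_cons] at this ⊢
        omega
      · have hlt1 : ∀ x ∈ x₁ :: t₁, x < m - 1 := by
          intro x hx
          rcases List.mem_cons.mp hx with rfl | hx
          · omega
          · have := lt_of_desc_cons h₁.1 x hx; omega
        have hlt2 : ∀ x ∈ x₂ :: t₂, x < m - 1 := by
          intro x hx
          rcases List.mem_cons.mp hx with rfl | hx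
          · omega
          · have := lt_of_desc_cons h₂.1 x hx; omega
        have := IH (m-1) (by omega) a (x₁ :: t₁) (x₂ :: t₂) h₁ h₂ hlt1 hlt2
        omega

lemma gap_pair (a : ℕ → ℝ) : ∀ (d k₀ k₁ : ℕ), k₁ - k₀ ≤ d → k₀ < k₁ →
    a k₀ * a k₁ < 0 →
    ∃ j₀ j₁, k₀ ≤ j₀ ∧ j₀ < j₁ ∧ j₁ ≤ k₁ ∧ a j₀ * a j₁ < 0 ∧
      ∀ l, j₀ < l → l < j₁ → a l = 0 := by
  intro d
  induction d with
  | zero => intro k₀ k₁ hd h01 _; omega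
  | succ d ih =>
    intro k₀ k₁ hd h01 hs
    by_cases hall : ∀ l, k₀ < l → l < k₁ → a l = 0
    · exact ⟨k₀, k₁, le_refl _, h01, le_refl _, hs, hall⟩
    · push_neg at hall
      obtain ⟨l, hl₀, hl₁, hlnz⟩ := hall
      have hk₀ : a k₀ ≠ 0 := fun h => by rw [h, zero_mul] at hs; exact lt_irrefl _ hs
      have hk₁ : a k₁ ≠ 0 := fun h => by rw [h, mul_zero] at hs; exact lt_irrefl _ hs
      by_cases hc : a k₀ * a l < 0
      · obtain ⟨j₀, j₁, hj⟩ := ih k₀ l (by omega) hl₀ hc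
        exact ⟨j₀, j₁, hj.1, hj.2.1, le_trans hj.2.2.1 (le_of_lt hl₁), hj.2.2.2⟩
      · have hpos : 0 < a k₀ * a l :=
          lt_of_le_of_ne (not_lt.mp hc) (Ne.symm (mul_ne_zero hk₀ hlnz))
        have hc' : a l * a k₁ < 0 := by nlinarith [mul_self_nonneg (a k₀)]
        obtain ⟨j₀, j₁, hj⟩ := ih l k₁ (by omega) hl₁ hc'
        exact ⟨j₀, j₁, le_trans (le_of_lt hl₀) hj.1, hj.2.1, hj.2.2.1, hj.2.2.2⟩

lemma alt_ne_zero (a : ℕ → ℝ) : ∀ (l : List ℕ),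
    List.IsChain (fun i j => a i * a j < 0) l → 2 ≤ l.length → ∀ x ∈ l, a x ≠ 0 := by
  intro l
  induction l with
  | nil => simp
  | cons u t ih =>
    intro hc hlen x hx
    rcases t with _ | ⟨v, s⟩
    · simp at hlen
    have huv : a u * a v < 0 := (List.isChain_cons_cons.mp hc).1
    rcases List.mem_cons.mp hx with rfl | hx
    · exact fun h => by rw [h, zero_mul] at huv; exact lt_irrefl _ huv
    rcases s with _ | ⟨w, s'⟩
    · have : x = v := by simpa using hx
      subst this
      exact fun h => by rw [h, mul_zero] at huv; exact lt_irrefl _ huv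
    · exact ih hc.tail (by simp) x hx

lemma desc_split (k₀ k₁ : ℕ) : ∀ (l : List ℕ), l.IsChain (· > ·) →
    (∀ x ∈ l, x ≤ k₀ ∨ k₁ ≤ x) →
    ∃ u w, l = u ++ w ∧ (∀ x ∈ u, k₁ ≤ x) ∧ (∀ x ∈ w, x ≤ k₀) := by
  intro l
  induction l with
  | nil => exact fun _ _ => ⟨[], [], by simp, by simp, by simp⟩
  | cons x t ih =>
    intro hc hside
    rcases hside x (List.mem_cons_self) with hx | hx
    · refine ⟨[], x :: t, by simp, by simp, ?_⟩
      intro y hy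
      rcases List.mem_cons.mp hy with rfl | hy
      · exact hx
      · have := lt_of_desc_cons hc y hy; omega
    · obtain ⟨u, w, heq, hu, hw⟩ := ih hc.tail
        (fun y hy => hside y (List.mem_cons_of_mem _ hy))
      refine ⟨x :: u, w, by rw [List.cons_append, heq], ?_, hw⟩
      intro y hy
      rcases List.mem_cons.mp hy with rfl | hy
      · exact hx
      · exact hu y hy

lemma chain'_imp_mem {α : Type*} {R S : α → α → Prop} :
    ∀ (l : List α), (∀ x ∈ l, ∀ y ∈ l, R x y → S x y) → l.IsChain R → l.IsChain S := by
  intro l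
  induction l with
  | nil => exact fun _ _ => List.isChain_nil
  | cons x t ih =>
    intro h hc
    rcases t with _ | ⟨v, s⟩
    · simp
    · rw [List.isChain_cons_cons] at hc ⊢
      refine ⟨h x (List.mem_cons_self) v (by simp) hc.1, ?_⟩
      exact ih (fun a ha b hb => h a (List.mem_cons_of_mem _ ha)
        b (List.mem_cons_of_mem _ hb)) hc.2

lemma flip_chain (m : ℕ) (μ a : ℕ → ℝ) (hμ : ∀ i j, i < j → j < m → μ i < μ j)
    (k₀ k₁ : ℕ) (h01 : k₀ < k₁) (hm : k₁ < m)
    (hsign : a k₀ * a k₁ < 0) (hgap : ∀ l, k₀ < l → l < k₁ → a l = 0)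
    (l : List ℕ)
    (hl : IsAlt (fun k => a k * (μ k - (μ k₀ + μ k₁)/2)) l)
    (hlm : ∀ x ∈ l, x < m) (hlen : 2 ≤ l.length) :
    ∃ l', IsAlt a l' ∧ (∀ x ∈ l', x < m) ∧ l'.length = l.length + 1 := by
  set γ : ℝ := (μ k₀ + μ k₁)/2 with hγ
  set a' : ℕ → ℝ := fun k => a k * (μ k - γ) with ha'
  have hγ₀ : μ k₀ < γ := by
    have := hμ k₀ k₁ h01 hm; rw [hγ]; linarith
  have hγ₁ : γ < μ k₁ := by
    have := hμ k₀ k₁ h01 hm; rw [hγ]; linarith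
  have hlow : ∀ x, x ≤ k₀ → μ x - γ < 0 := by
    intro x hx
    rcases eq_or_lt_of_le hx with rfl | h
    · linarith
    · have := hμ x k₀ h (by omega); linarith
  have hhigh : ∀ x, k₁ ≤ x → x < m → 0 < μ x - γ := by
    intro x hx hxm
    rcases eq_or_lt_of_le hx with rfl | h
    · linarith
    · have := hμ k₁ x h hxm; linarith
  have hk₀ : a k₀ ≠ 0 := fun h => by rw [h, zero_mul] at hsign; exact lt_irrefl _ hsign
  have hk₁ : a k₁ ≠ 0 := fun h => by rw [h, mul_zero] at hsign; exact lt_irrefl _ hsign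
  have hne : ∀ x ∈ l, a' x ≠ 0 := alt_ne_zero a' l hl.2 hlen
  have hanz : ∀ x ∈ l, a x ≠ 0 := by
    intro x hx h
    exact hne x hx (by rw [ha']; simp [h])
  have hside : ∀ x ∈ l, x ≤ k₀ ∨ k₁ ≤ x := by
    intro x hx
    by_contra h
    push_neg at h
    exact hanz x hx (hgap x (by omega) (by omega))
  obtain ⟨u, w, heq, hu, hw⟩ := desc_split k₀ k₁ l hl.1 hside
  have hul : ∀ x ∈ u, x ∈ l := fun x hx => heq ▸ List.mem_append_left _ hx
  have hwl : ∀ x ∈ w, x ∈ l := fun x hx => heq ▸ List.mem_append_right _ hx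
  have hchl := heq ▸ hl.1
  have hchl2 := heq ▸ hl.2
  rw [List.isChain_append] at hchl hchl2
  -- transfer alternation to `a` on each side
  have htu : List.IsChain (fun i j => a i * a j < 0) u := by
    refine chain'_imp_mem u ?_ hchl2.1
    intro x hx y hy hxy
    have h1 : 0 < μ x - γ := hhigh x (hu x hx) (hlm x (hul x hx))
    have h2 : 0 < μ y - γ := hhigh y (hu y hy) (hlm y (hul y hy))
    have heq2 : a' x * a' y = (a x * a y) * ((μ x - γ) * (μ y - γ)) := by
      rw [ha']; ring
    rw [heq2] at hxy
    nlinarith [mul_pos h1 h2]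
  have htw : List.IsChain (fun i j => a i * a j < 0) w := by
    refine chain'_imp_mem w ?_ hchl2.2.1
    intro x hx y hy hxy
    have h1 : μ x - γ < 0 := hlow x (hw x hx)
    have h2 : μ y - γ < 0 := hlow y (hw y hy)
    have heq2 : a' x * a' y = (a x * a y) * ((μ x - γ) * (μ y - γ)) := by
      rw [ha']; ring
    rw [heq2] at hxy
    nlinarith [mul_pos_of_neg_of_neg h1 h2]
  by_cases hue : u = []
  · -- u empty : l = w, prepend k₀ or k₁
    have heqw : l = w := by rw [heq, hue, List.nil_append]
    rcases hw3 : w with _ | ⟨d, w'⟩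
    · rw [heqw, hw3] at hlen; simp at hlen
    have hdw : d ∈ w := by rw [hw3]; exact List.mem_cons_self
    have hd : d ≤ k₀ := hw d hdw
    have hda : a d ≠ 0 := hanz d (hwl d hdw)
    have hlen2 : ∀ e : ℕ, (e :: d :: w').length = l.length + 1 := by
      intro e; rw [heqw, hw3]; simp
    have hmem2 : ∀ x ∈ d :: w', x < m := by
      intro x hx; exact hlm x (hwl x (hw3 ▸ hx))
    by_cases hc1 : a k₀ * a d < 0
    · have hdk : d < k₀ := by
        rcases eq_or_lt_of_le hd with rfl | h
        · nlinarith
        · exact h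
      refine ⟨k₀ :: d :: w', ⟨?_, ?_⟩, ?_, hlen2 k₀⟩
      · exact List.isChain_cons_cons.mpr ⟨hdk, hw3 ▸ hchl.2.1⟩
      · exact List.isChain_cons_cons.mpr ⟨hc1, hw3 ▸ htw⟩
      · intro x hx
        rcases List.mem_cons.mp hx with rfl | hx
        · omega
        · exact hmem2 x hx
    · have hpos : 0 < a k₀ * a d :=
        lt_of_le_of_ne (not_lt.mp hc1) (Ne.symm (mul_ne_zero hk₀ hda))
      have hc2 : a k₁ * a d < 0 := by nlinarith [mul_self_nonneg (a k₀)]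
      refine ⟨k₁ :: d :: w', ⟨?_, ?_⟩, ?_, hlen2 k₁⟩
      · exact List.isChain_cons_cons.mpr ⟨by omega, hw3 ▸ hchl.2.1⟩
      · exact List.isChain_cons_cons.mpr ⟨hc2, hw3 ▸ htw⟩
      · intro x hx
        rcases List.mem_cons.mp hx with rfl | hx
        · omega
        · exact hmem2 x hx
  · -- u nonempty
    have hun : u ≠ [] := hue
    set c := u.getLast hun with hcdef
    have hcu : c ∈ u := List.getLast_mem hun
    have hck : k₁ ≤ c := hu c hcu
    have hcm : c < m := hlm c (hul c hcu)
    have hca : a c ≠ 0 := hanz c (hul c hcu)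
    rcases hw2 : w with _ | ⟨d, w'⟩
    · -- w empty : l = u, append k₀ or k₁
      have heql : l = u := by rw [heq, hw2, List.append_nil]
      have hlenl : ∀ e : ℕ, (u ++ [e]).length = l.length + 1 := by
        intro e; rw [heql]; simp
      by_cases hc1 : a c * a k₁ < 0
      · have hkc : k₁ < c := by
          rcases eq_or_lt_of_le hck with rfl | h
          · nlinarith
          · exact h
        refine ⟨u ++ [k₁], ⟨?_, ?_⟩, ?_, hlenl k₁⟩
        · rw [List.isChain_append]
          refine ⟨hchl.1, List.isChain_singleton _, ?_⟩
          intro x hx y hy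
          rw [List.getLast?_eq_getLast hun] at hx
          simp at hx hy
          subst hx; subst hy
          exact hkc
        · rw [List.isChain_append]
          refine ⟨htu, List.isChain_singleton _, ?_⟩
          intro x hx y hy
          rw [List.getLast?_eq_getLast hun] at hx
          simp at hx hy
          subst hx; subst hy
          exact hc1
        · intro x hx
          rcases List.mem_append.mp hx with hx | hx
          · exact hlm x (hul x hx)
          · simp at hx; omega
      · have hpos : 0 < a c * a k₁ :=
          lt_of_le_of_ne (not_lt.mp hc1) (Ne.symm (mul_ne_zero hca hk₁))
        have hc2 : a c * a k₀ < 0 := by nlinarith [mul_self_nonneg (a k₁)]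
        refine ⟨u ++ [k₀], ⟨?_, ?_⟩, ?_, hlenl k₀⟩
        · rw [List.isChain_append]
          refine ⟨hchl.1, List.isChain_singleton _, ?_⟩
          intro x hx y hy
          rw [List.getLast?_eq_getLast hun] at hx
          simp at hx hy
          subst hx; subst hy
          omega
        · rw [List.isChain_append]
          refine ⟨htu, List.isChain_singleton _, ?_⟩
          intro x hx y hy
          rw [List.getLast?_eq_getLast hun] at hx
          simp at hx hy
          subst hx; subst hy
          exact hc2
        · intro x hx
          rcases List.mem_append.mp hx with hx | hx
          · exact hlm x (hul x hx)
          · simp at hx; omega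
    · -- both nonempty : insert between
      have hdw : d ∈ w := by rw [hw2]; exact List.mem_cons_self
      have hdk : d ≤ k₀ := hw d hdw
      have hda : a d ≠ 0 := hanz d (hwl d hdw)
      have hjun : c > d ∧ a' c * a' d < 0 := by
        constructor
        · have := hchl.2.2
          rw [List.getLast?_eq_getLast hun, hw2] at this
          exact this c rfl d rfl
        · have := hchl2.2.2
          rw [List.getLast?_eq_getLast hun, hw2] at this
          exact this c rfl d rfl
      have hcd : 0 < a c * a d := by
        have heq2 : a' c * a' d = (a c * a d) * ((μ c - γ) * (μ d - γ)) := by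
          rw [ha']; ring
        have h1 : 0 < μ c - γ := hhigh c hck hcm
        have h2 : μ d - γ < 0 := hlow d hdk
        have hj := hjun.2
        rw [heq2] at hj
        nlinarith [mul_neg_of_pos_of_neg h1 h2]
      have hchoice : ∃ e, (e = k₀ ∨ e = k₁) ∧ a c * a e < 0 ∧ a e * a d < 0 ∧
          d < e ∧ e < c := by
        by_cases hc1 : a c * a k₁ < 0
        · have he2 : a k₁ * a d < 0 := by nlinarith [mul_self_nonneg (a c)]
          have hkc : k₁ < c := by
            rcases eq_or_lt_of_le hck with rfl | h
            · nlinarith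
            · exact h
          exact ⟨k₁, Or.inr rfl, hc1, he2, by omega, hkc⟩
        · have hpos : 0 < a c * a k₁ :=
            lt_of_le_of_ne (not_lt.mp hc1) (Ne.symm (mul_ne_zero hca hk₁))
          have he1 : a c * a k₀ < 0 := by nlinarith [mul_self_nonneg (a k₁)]
          have he2 : a k₀ * a d < 0 := by nlinarith [mul_self_nonneg (a c)]
          have hdk' : d < k₀ := by
            rcases eq_or_lt_of_le hdk with rfl | h
            · nlinarith
            · exact h
          exact ⟨k₀, Or.inl rfl, he1, he2, hdk', by omega⟩
      obtain ⟨e, hek, hce, hed, hde, hec⟩ := hchoice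
      refine ⟨u ++ e :: w, ⟨?_, ?_⟩, ?_, ?_⟩
      · rw [List.isChain_append]
        refine ⟨hchl.1, ?_, ?_⟩
        · rw [hw2]
          exact List.isChain_cons_cons.mpr ⟨by omega, hw2 ▸ hchl.2.1⟩
        · intro x hx y hy
          rw [List.getLast?_eq_getLast hun] at hx
          simp at hx hy
          subst hx; subst hy
          exact hec
      · rw [List.isChain_append]
        refine ⟨htu, ?_, ?_⟩
        · rw [hw2]
          exact List.isChain_cons_cons.mpr ⟨hed, hw2 ▸ htw⟩
        · intro x hx y hy
          rw [List.getLast?_eq_getLast hun] at hx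
          simp at hx hy
          subst hx; subst hy
          exact hce
      · intro x hx
        rcases List.mem_append.mp hx with hx | hx
        · exact hlm x (hul x hx)
        · rcases List.mem_cons.mp hx with rfl | hx
          · rcases hek with rfl | rfl <;> omega
          · exact hlm x (hwl x hx)
      · rw [heq]
        simp
        omega

noncomputable def sumFn (m : ℕ) (μ a : ℕ → ℝ) (x : ℝ) : ℝ :=
  ∑ k ∈ Finset.range m, a k * x ^ (μ k)

lemma rolle_step (m : ℕ) (μ a : ℕ → ℝ) (γ : ℝ) (x y : ℝ) (hx : 0 < x) (hxy : x < y)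
    (hfx : sumFn m μ a x = 0) (hfy : sumFn m μ a y = 0) :
    ∃ ξ ∈ Set.Ioo x y, sumFn m μ (fun k => a k * (μ k - γ)) ξ = 0 := by
  set g : ℝ → ℝ := fun t => ∑ k ∈ Finset.range m, a k * t ^ (μ k - γ) with hg
  set g' : ℝ → ℝ := fun t => ∑ k ∈ Finset.range m, a k * ((μ k - γ) * t ^ (μ k - γ - 1))
    with hg'
  have hderiv : ∀ t : ℝ, t ≠ 0 → HasDerivAt g (g' t) t := by
    intro t ht0
    apply HasDerivAt.fun_sum
    intro k _
    exact (Real.hasDerivAt_rpow_const (Or.inl ht0)).const_mul (a k)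
  have hcont : ContinuousOn g (Set.Icc x y) := by
    intro t ht
    have ht0 : t ≠ 0 := ne_of_gt (lt_of_lt_of_le hx ht.1)
    exact (hderiv t ht0).continuousAt.continuousWithinAt
  have hgz : ∀ t : ℝ, 0 < t → sumFn m μ a t = 0 → g t = 0 := by
    intro t ht hs
    have h2 : g t = (∑ k ∈ Finset.range m, a k * t ^ (μ k)) / t ^ γ := by
      rw [hg, Finset.sum_div]
      apply Finset.sum_congr rfl
      intro k _
      rw [Real.rpow_sub ht]
      ring
    unfold sumFn at hs
    rw [h2, hs, zero_div]
  obtain ⟨ξ, hξ, hder⟩ := exists_hasDerivAt_eq_zero hxy hcont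
    (by rw [hgz x hx hfx, hgz y (lt_trans hx hxy) hfy])
    (fun t ht => hderiv t (ne_of_gt (lt_trans hx ht.1)))
  refine ⟨ξ, hξ, ?_⟩
  have hξ0 : 0 < ξ := lt_trans hx hξ.1
  have h3 : sumFn m μ (fun k => a k * (μ k - γ)) ξ = ξ ^ (γ + 1) * g' ξ := by
    unfold sumFn
    rw [hg', Finset.mul_sum]
    apply Finset.sum_congr rfl
    intro k _
    rw [show μ k = (γ + 1) + (μ k - γ - 1) by ring, Real.rpow_add hξ0]
    ring
  rw [h3, hder, mul_zero]

lemma rolle_list (m : ℕ) (μ a : ℕ → ℝ) (γ : ℝ) :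
    ∀ (Z : List ℝ) (z : ℝ), List.IsChain (· < ·) (z :: Z) → 0 < z →
    (∀ t ∈ z :: Z, sumFn m μ a t = 0) →
    ∃ Z' : List ℝ, Z'.length = Z.length ∧ List.IsChain (· < ·) Z' ∧
      (∀ t ∈ Z', z < t ∧ sumFn m μ (fun k => a k * (μ k - γ)) t = 0) := by
  intro Z
  induction Z with
  | nil => exact fun z _ _ _ => ⟨[], rfl, List.isChain_nil, by simp⟩
  | cons y rest ih =>
    intro z hch hz hzero
    have hzy : z < y := (List.isChain_cons_cons.mp hch).1
    obtain ⟨ξ, hξ, hξz⟩ := rolle_step m μ a γ z y hz hzy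
      (hzero z (List.mem_cons_self))
      (hzero y (List.mem_cons_of_mem _ (List.mem_cons_self)))
    obtain ⟨Z'', hlen, hch'', hprop⟩ := ih y (List.isChain_cons_cons.mp hch).2
      (lt_trans hz hzy) (fun t ht => hzero t (List.mem_cons_of_mem _ ht))
    refine ⟨ξ :: Z'', by simp [hlen], ?_, ?_⟩
    · rw [List.isChain_cons]
      refine ⟨?_, hch''⟩
      intro t ht
      have := hprop t (List.mem_of_mem_head? ht)
      linarith [hξ.2, this.1]
    · intro t ht
      rcases List.mem_cons.mp ht with rfl | ht
      · exact ⟨hξ.1, hξz⟩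
      · exact ⟨lt_trans hzy (hprop t ht).1, (hprop t ht).2⟩

lemma descartes : ∀ (v m : ℕ) (μ a : ℕ → ℝ),
    (∀ i j, i < j → j < m → μ i < μ j) →
    (∃ k, k < m ∧ a k ≠ 0) →
    (∀ l : List ℕ, IsAlt a l → (∀ x ∈ l, x < m) → l.length ≤ v + 1) →
    ∀ Z : List ℝ, Z.IsChain (· < ·) → (∀ t ∈ Z, 0 < t) →
    (∀ t ∈ Z, sumFn m μ a t = 0) → Z.length ≤ v := by
  intro v
  induction v with
  | zero =>
    intro m μ a hμ ⟨k₀, hk₀m, hk₀⟩ hchain Z hZch hZpos hZzero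
    have hpair : ∀ k l, k < m → l < m → k ≠ l → 0 ≤ a k * a l := by
      intro k l hkm hlm hkl
      by_contra h
      push_neg at h
      rcases Nat.lt_or_ge k l with hlt | hge
      · have := hchain [l, k] ⟨by simp [hlt],
          by simp [List.isChain_cons_cons]; nlinarith⟩
          (by intro x hx; simp at hx; rcases hx with rfl | rfl <;> omega)
        simp at this
      · have hlk : l < k := by omega
        have := hchain [k, l] ⟨by simp [hlk],
          by simp [List.isChain_cons_cons]; nlinarith⟩
          (by intro x hx; simp at hx; rcases hx with rfl | rfl <;> omega)
        simp at this
    rcases Z with _ | ⟨t, rest⟩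
    · simp
    exfalso
    have ht : 0 < t := hZpos t (List.mem_cons_self)
    have htz : sumFn m μ a t = 0 := hZzero t (List.mem_cons_self)
    unfold sumFn at htz
    rcases lt_or_gt_of_ne hk₀ with hneg | hpos
    · -- a k₀ < 0 : all coefficients ≤ 0
      have hall : ∀ k, k < m → a k ≤ 0 := by
        intro k hkm
        by_contra h
        push_neg at h
        rcases eq_or_ne k k₀ with rfl | hne
        · linarith
        · nlinarith [hpair k k₀ hkm hk₀m hne]
      have h0 : (0:ℝ) < ∑ k ∈ Finset.range m, -(a k * t ^ (μ k)) := by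
        apply Finset.sum_pos'
        · intro k hk
          simp only [Finset.mem_range] at hk
          have := hall k hk
          have := Real.rpow_pos_of_pos ht (μ k)
          nlinarith
        · refine ⟨k₀, Finset.mem_range.mpr hk₀m, ?_⟩
          have := Real.rpow_pos_of_pos ht (μ k₀)
          nlinarith
      have h1 : ∑ k ∈ Finset.range m, -(a k * t ^ (μ k)) =
          -∑ k ∈ Finset.range m, a k * t ^ (μ k) := by simp
      rw [h1, htz] at h0
      simp at h0
    · -- a k₀ > 0 : all coefficients ≥ 0
      have hall : ∀ k, k < m → 0 ≤ a k := by
        intro k hkm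
        by_contra h
        push_neg at h
        rcases eq_or_ne k k₀ with rfl | hne
        · linarith
        · nlinarith [hpair k k₀ hkm hk₀m hne]
      have h0 : (0:ℝ) < ∑ k ∈ Finset.range m, a k * t ^ (μ k) := by
        apply Finset.sum_pos'
        · intro k hk
          simp only [Finset.mem_range] at hk
          have := hall k hk
          have := Real.rpow_pos_of_pos ht (μ k)
          nlinarith
        · refine ⟨k₀, Finset.mem_range.mpr hk₀m, ?_⟩
          have := Real.rpow_pos_of_pos ht (μ k₀)
          nlinarith
      rw [htz] at h0
      simp at h0
  | succ v ih =>
    intro m μ a hμ hnz hchain Z hZch hZpos hZzero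
    by_cases hex : ∃ l : List ℕ, IsAlt a l ∧ (∀ x ∈ l, x < m) ∧ l.length = v + 2
    · obtain ⟨l, hla, hlb, hlc⟩ := hex
      rcases l with _ | ⟨c₀, l'⟩
      · simp only [List.length_nil] at hlc; omega
      rcases l' with _ | ⟨c₁, t⟩
      · simp only [List.length_cons, List.length_nil] at hlc; omega
      have hc₁₀ : c₁ < c₀ := (List.isChain_cons_cons.mp hla.1).1
      have hc₀m : c₀ < m := hlb c₀ (List.mem_cons_self)
      have hprod : a c₀ * a c₁ < 0 := (List.isChain_cons_cons.mp hla.2).1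
      obtain ⟨j₀, j₁, hj₁, hj₂, hj₃, hj₄, hj₅⟩ := gap_pair a (c₀ - c₁) c₁ c₀
        (by omega) hc₁₀ (by nlinarith)
      have hj₁m : j₁ < m := by omega
      set γ : ℝ := (μ j₀ + μ j₁)/2 with hγ
      set a' : ℕ → ℝ := fun k => a k * (μ k - γ) with ha'
      -- a' has no long alternating chains
      have hchain' : ∀ l : List ℕ, IsAlt a' l → (∀ x ∈ l, x < m) →
          l.length ≤ v + 1 := by
        intro l hl hlm2
        by_contra h
        push_neg at h
        have h2 : 2 ≤ l.length := by omega
        obtain ⟨l2, hl2a, hl2b, hl2c⟩ := flip_chain m μ a hμ j₀ j₁ hj₂ hj₁m hj₄ hj₅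
          l hl hlm2 h2
        have := hchain l2 hl2a hl2b
        omega
      -- a' is not identically zero on range m
      have hnz' : ∃ k, k < m ∧ a' k ≠ 0 := by
        refine ⟨j₀, by omega, ?_⟩
        have hja : a j₀ ≠ 0 := fun h => by rw [h, zero_mul] at hj₄; exact lt_irrefl _ hj₄
        have hμj : μ j₀ - γ < 0 := by
          have := hμ j₀ j₁ hj₂ hj₁m
          rw [hγ]; linarith
        rw [ha']
        exact mul_ne_zero hja (ne_of_lt hμj)
      rcases Z with _ | ⟨z, rest⟩
      · simp
      have hz : 0 < z := hZpos z (List.mem_cons_self)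
      obtain ⟨Z', hZ'len, hZ'ch, hZ'prop⟩ := rolle_list m μ a γ rest z hZch hz hZzero
      have := ih m μ a' hμ hnz' hchain' Z' hZ'ch
        (fun t ht => lt_trans hz (hZ'prop t ht).1)
        (fun t ht => (hZ'prop t ht).2)
      simp only [List.length_cons]
      omega
    · push_neg at hex
      have hchain2 : ∀ l : List ℕ, IsAlt a l → (∀ x ∈ l, x < m) → l.length ≤ v + 1 := by
        intro l hl hlm2
        have h1 := hchain l hl hlm2
        have h2 := hex l hl hlm2
        omega
      have := ih m μ a hμ hnz hchain2 Z hZch hZpos hZzero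
      omega

open Polynomial Finset in
noncomputable def auxPoly {n : ℕ} (p : Fin n → ℝ) (d : Fin n → ℝ) : Polynomial ℝ :=
  ∑ j, C (d j) * ∏ k ∈ univ.erase j, (X + C (p k))

open Polynomial Finset in
lemma auxPoly_natDegree_lt {n : ℕ} (p d : Fin n → ℝ) (hn : 0 < n) :
    (auxPoly p d).natDegree < n := by
  have h1 : (auxPoly p d).natDegree ≤ n - 1 := by
    apply Polynomial.natDegree_sum_le_of_forall_le
    intro j _
    have h2 : (∏ k ∈ univ.erase j, (X + C (p k))).natDegree ≤ n - 1 := by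
      refine le_trans (Polynomial.natDegree_prod_le _ _) ?_
      have : ∀ k ∈ univ.erase j, (X + C (p k)).natDegree = 1 := by
        intro k _; exact natDegree_X_add_C _
      rw [Finset.sum_congr rfl this]
      simp [Finset.card_erase_of_mem]
    calc (C (d j) * ∏ k ∈ univ.erase j, (X + C (p k))).natDegree
        ≤ (C (d j)).natDegree + (∏ k ∈ univ.erase j, (X + C (p k))).natDegree :=
          natDegree_mul_le
      _ ≤ 0 + (n - 1) := add_le_add (le_of_eq (natDegree_C _)) h2
      _ = n - 1 := by omega
  omega

open Polynomial Finset in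
lemma auxPoly_eval_neg {n : ℕ} (p : Fin n → ℝ) (hinj : Function.Injective p)
    (d : Fin n → ℝ) (i : Fin n) :
    (auxPoly p d).eval (-(p i)) = d i * ∏ k ∈ univ.erase i, (p k - p i) := by
  unfold auxPoly
  rw [eval_finset_sum, Finset.sum_eq_single i]
  · rw [eval_mul, eval_C, eval_prod]
    congr 1
    apply Finset.prod_congr rfl
    intro k _
    simp only [eval_add, eval_X, eval_C]
    ring
  · intro j _ hji
    rw [eval_mul, eval_prod]
    have hiz : i ∈ univ.erase j := Finset.mem_erase.mpr ⟨Ne.symm hji, mem_univ i⟩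
    rw [Finset.prod_eq_zero hiz (by simp only [eval_add, eval_X, eval_C]; ring)]
    simp
  · simp

open Polynomial Finset in
lemma auxPoly_eval_pos {n : ℕ} (p : Fin n → ℝ) (d : Fin n → ℝ) (x : ℝ) :
    (auxPoly p d).eval x = ∑ j, d j * ∏ k ∈ univ.erase j, (x + p k) := by
  unfold auxPoly
  rw [eval_finset_sum]
  apply Finset.sum_congr rfl
  intro j _
  rw [eval_mul, eval_C, eval_prod]
  congr 1
  apply Finset.prod_congr rfl
  intro k _
  simp

lemma sum_split (n : ℕ) (P Q : Polynomial ℝ) (hP : P.natDegree < n)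
    (hQ : Q.natDegree < n) (r x : ℝ) (hx : 0 < x) :
    sumFn (2*n) (fun k => if k < n then (k:ℝ) else r + ((k-n:ℕ):ℝ))
      (fun k => if k < n then Q.coeff k else P.coeff (k-n)) x
    = Q.eval x + x ^ r * P.eval x := by
  unfold sumFn
  have hsplit : ∑ k ∈ Finset.range (2*n),
        (if k < n then Q.coeff k else P.coeff (k-n)) *
          x ^ (if k < n then (k:ℝ) else r + ((k-n:ℕ):ℝ))
      = (∑ k ∈ Finset.range n, (if k < n then Q.coeff k else P.coeff (k-n)) *
          x ^ (if k < n then (k:ℝ) else r + ((k-n:ℕ):ℝ)))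
        + ∑ k ∈ Finset.range n, (if n + k < n then Q.coeff (n+k) else P.coeff (n+k-n)) *
          x ^ (if n + k < n then ((n+k:ℕ):ℝ) else r + ((n+k-n:ℕ):ℝ)) := by
    rw [Finset.range_eq_Ico, ← Finset.sum_Ico_consecutive _ (Nat.zero_le n) (by omega)]
    congr 1
    · rw [Finset.range_eq_Ico]
    rw [Finset.sum_Ico_eq_sum_range]
    have h2 : 2*n - n = n := by omega
    rw [h2]
  rw [hsplit]
  congr 1
  · rw [Polynomial.eval_eq_sum_range' hQ x]
    apply Finset.sum_congr rfl
    intro k hk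
    have hkn : k < n := Finset.mem_range.mp hk
    rw [if_pos hkn, if_pos hkn, Real.rpow_natCast]
  · rw [Polynomial.eval_eq_sum_range' hP x, Finset.mul_sum]
    apply Finset.sum_congr rfl
    intro k hk
    have h1 : ¬ (n + k < n) := by omega
    have h2 : n + k - n = k := by omega
    rw [if_neg h1, if_neg h1, h2, Real.rpow_add hx, Real.rpow_natCast]
    ring

lemma sum_split_neg (n : ℕ) (P Q : Polynomial ℝ) (hP : P.natDegree < n)
    (hQ : Q.natDegree < n) (r x : ℝ) (hx : 0 < x) :
    sumFn (2*n) (fun k => if k < n then (k:ℝ) else r + ((k-n:ℕ):ℝ))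
      (fun k => if k < n then (-1:ℝ)^(k+1) * Q.coeff k else (-1:ℝ)^(k-n) * P.coeff (k-n)) x
    = x ^ r * P.eval (-x) - Q.eval (-x) := by
  unfold sumFn
  have hsplit : ∑ k ∈ Finset.range (2*n),
        (if k < n then (-1:ℝ)^(k+1) * Q.coeff k else (-1:ℝ)^(k-n) * P.coeff (k-n)) *
          x ^ (if k < n then (k:ℝ) else r + ((k-n:ℕ):ℝ))
      = (∑ k ∈ Finset.range n,
          (if k < n then (-1:ℝ)^(k+1) * Q.coeff k else (-1:ℝ)^(k-n) * P.coeff (k-n)) *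
          x ^ (if k < n then (k:ℝ) else r + ((k-n:ℕ):ℝ)))
        + ∑ k ∈ Finset.range n,
          (if n + k < n then (-1:ℝ)^(n+k+1) * Q.coeff (n+k)
            else (-1:ℝ)^(n+k-n) * P.coeff (n+k-n)) *
          x ^ (if n + k < n then ((n+k:ℕ):ℝ) else r + ((n+k-n:ℕ):ℝ)) := by
    rw [Finset.range_eq_Ico, ← Finset.sum_Ico_consecutive _ (Nat.zero_le n) (by omega)]
    congr 1
    · rw [Finset.range_eq_Ico]
    rw [Finset.sum_Ico_eq_sum_range]
    have h2 : 2*n - n = n := by omega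
    rw [h2]
  rw [hsplit]
  rw [sub_eq_add_neg, add_comm (x ^ r * P.eval (-x))]
  congr 1
  · rw [Polynomial.eval_eq_sum_range' hQ (-x), ← Finset.sum_neg_distrib]
    apply Finset.sum_congr rfl
    intro k hk
    have hkn : k < n := Finset.mem_range.mp hk
    rw [if_pos hkn, if_pos hkn, Real.rpow_natCast]
    ring
  · rw [Polynomial.eval_eq_sum_range' hP (-x), Finset.mul_sum]
    apply Finset.sum_congr rfl
    intro k hk
    have h1 : ¬ (n + k < n) := by omega
    have h2 : n + k - n = k := by omega
    rw [if_neg h1, if_neg h1, h2, Real.rpow_add hx, Real.rpow_natCast]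
    ring

/-- for `n` odd, `p 0, …, p (n-1)` distinct positive reals, coefficients
`c` not all zero, and `r > n - 1`, the function
`f x = Σⱼ c j * (x^r + (p j)^r) / (x + p j)` has at most `n - 1` zeros in `(0, ∞)`. -/
theorem kwong_function_zeros {n : ℕ} (hn : Odd n) (p : Fin n → ℝ)
    (hpos : ∀ i, 0 < p i) (hinj : Function.Injective p)
    (c : Fin n → ℝ) (hc : c ≠ 0) (r : ℝ) (hr : (n : ℝ) - 1 < r) :
    {x : ℝ | x ∈ Set.Ioi (0 : ℝ) ∧
        ∑ j, c j * ((x ^ r + p j ^ r) / (x + p j)) = 0}.encard ≤ (n - 1 : ℕ) := by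
  classical
  by_contra hcon
  have hn1 : 0 < n := hn.pos
  set S := {x : ℝ | x ∈ Set.Ioi (0:ℝ) ∧ ∑ j, c j * ((x ^ r + p j ^ r)/(x + p j)) = 0}
    with hS
  -- n distinct zeros
  have hlt : ((n-1 : ℕ) : ℕ∞) < S.encard := not_le.mp hcon
  have hle : ((n:ℕ) : ℕ∞) ≤ S.encard := by
    have h1 := Order.add_one_le_of_lt hlt
    have h2 : ((n - 1 + 1 : ℕ) : ℕ∞) = ((n-1:ℕ):ℕ∞) + 1 := by push_cast; ring
    rw [← h2, show n - 1 + 1 = n from by omega] at h1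
    exact h1
  obtain ⟨T, hTS, hTenc⟩ := Set.exists_subset_encard_eq hle
  have hTfin : T.Finite := Set.finite_of_encard_eq_coe hTenc
  have hTcard : hTfin.toFinset.card = n := by
    have h3 := hTfin.encard_eq_coe_toFinset_card
    rw [hTenc] at h3
    exact_mod_cast h3.symm
  -- the polynomials
  set Pp := auxPoly p c with hPp
  set Qp := auxPoly p (fun j => c j * p j ^ r) with hQp
  have hPdeg : Pp.natDegree < n := auxPoly_natDegree_lt p c hn1
  have hQdeg : Qp.natDegree < n := auxPoly_natDegree_lt p _ hn1
  set μf : ℕ → ℝ := fun k => if k < n then (k:ℝ) else r + ((k - n : ℕ):ℝ) with hμf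
  set af : ℕ → ℝ := fun k => if k < n then Qp.coeff k else Pp.coeff (k - n) with haf
  set bf : ℕ → ℝ := fun k => if k < n then (-1:ℝ)^(k+1) * Qp.coeff k
    else (-1:ℝ)^(k-n) * Pp.coeff (k-n) with hbf
  have hμmono : ∀ i j, i < j → j < 2*n → μf i < μf j := by
    intro i j hij hj
    rw [hμf]
    by_cases hi : i < n
    · by_cases hjn : j < n
      · simp only [if_pos hi, if_pos hjn]
        exact_mod_cast hij
      · simp only [if_pos hi, if_neg hjn]
        have h1 : (i:ℝ) ≤ (n:ℝ) - 1 := by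
          have h0 : (i:ℕ) ≤ n - 1 := by omega
          have h0' : ((i:ℕ):ℝ) ≤ ((n-1:ℕ):ℝ) := by exact_mod_cast h0
          rwa [Nat.cast_sub (by omega), Nat.cast_one] at h0'
        have h2 : (0:ℝ) ≤ ((j - n : ℕ):ℝ) := Nat.cast_nonneg _
        linarith
    · have hjn : ¬ j < n := by omega
      simp only [if_neg hi, if_neg hjn]
      have h3 : (i - n : ℕ) < (j - n : ℕ) := by omega
      have h4 : (((i-n):ℕ):ℝ) < (((j-n):ℕ):ℝ) := by exact_mod_cast h3
      linarith
  -- zeros of the positive-side function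
  have hWf : ∀ x ∈ S, sumFn (2*n) μf af x = 0 := by
    intro x hxS
    have hx : 0 < x := hxS.1
    have hfx : ∑ j, c j * ((x ^ r + p j ^ r)/(x + p j)) = 0 := hxS.2
    have hkey : sumFn (2*n) μf af x
        = (∑ j, c j * ((x ^ r + p j ^ r)/(x + p j))) * ∏ k, (x + p k) := by
      rw [hμf, haf, sum_split n Pp Qp hPdeg hQdeg r x hx]
      rw [Finset.sum_mul]
      have hterm : ∀ j : Fin n, c j * ((x ^ r + p j ^ r)/(x + p j)) * ∏ k, (x + p k)
          = (c j * p j ^ r) * (∏ k ∈ Finset.univ.erase j, (x + p k))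
            + x ^ r * (c j * ∏ k ∈ Finset.univ.erase j, (x + p k)) := by
        intro j
        have hxp : x + p j ≠ 0 := ne_of_gt (by have := hpos j; linarith)
        rw [← Finset.mul_prod_erase Finset.univ _ (Finset.mem_univ j)]
        field_simp
        ring
      rw [Finset.sum_congr rfl (fun j _ => hterm j), Finset.sum_add_distrib,
        ← Finset.mul_sum]
      rw [hPp, hQp, auxPoly_eval_pos, auxPoly_eval_pos]
    rw [hkey, hfx, zero_mul]
  -- zeros of the negative-side function
  have hprodne : ∀ i : Fin n, ∏ k ∈ Finset.univ.erase i, (p k - p i) ≠ 0 := by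
    intro i
    apply Finset.prod_ne_zero_iff.mpr
    intro k hk
    exact sub_ne_zero.mpr (fun he => (Finset.mem_erase.mp hk).1 (hinj he))
  have hzb : ∀ i : Fin n, sumFn (2*n) μf bf (p i) = 0 := by
    intro i
    rw [hμf, hbf, sum_split_neg n Pp Qp hPdeg hQdeg r (p i) (hpos i)]
    rw [hPp, hQp, auxPoly_eval_neg p hinj c i, auxPoly_eval_neg p hinj _ i]
    ring
  -- nonvanishing coefficients
  obtain ⟨i₀, hi₀⟩ : ∃ i, c i ≠ 0 := by
    by_contra h
    push_neg at h
    exact hc (funext h)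
  have hPne : Pp ≠ 0 := by
    intro h
    have h5 := auxPoly_eval_neg p hinj c i₀
    rw [← hPp, h] at h5
    simp only [Polynomial.eval_zero] at h5
    exact hprodne i₀ (by
      rcases mul_eq_zero.mp h5.symm with h6 | h6
      · exact absurd h6 hi₀
      · exact h6)
  have hlc : Pp.coeff Pp.natDegree ≠ 0 := by
    have := Polynomial.leadingCoeff_ne_zero.mpr hPne
    rwa [Polynomial.leadingCoeff] at this
  have hafne : ∃ k, k < 2*n ∧ af k ≠ 0 := by
    refine ⟨n + Pp.natDegree, by omega, ?_⟩
    rw [haf]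
    simp only [if_neg (by omega : ¬ n + Pp.natDegree < n)]
    rwa [Nat.add_sub_cancel_left]
  have hbfne : ∃ k, k < 2*n ∧ bf k ≠ 0 := by
    refine ⟨n + Pp.natDegree, by omega, ?_⟩
    rw [hbf]
    simp only [if_neg (by omega : ¬ n + Pp.natDegree < n)]
    rw [Nat.add_sub_cancel_left]
    exact mul_ne_zero (pow_ne_zero _ (by norm_num)) hlc
  -- the positive zero list
  set F := hTfin.toFinset with hF
  set Zp := F.sort (· ≤ ·) with hZp
  have hZp_len : Zp.length = n := by rw [hZp, Finset.length_sort, hTcard]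
  have hZp_ch : Zp.IsChain (· < ·) :=
    List.isChain_iff_pairwise.mpr (Finset.sortedLT_sort F).pairwise
  have hZp_mem : ∀ x ∈ Zp, x ∈ S := by
    intro x hx
    apply hTS
    rw [hZp] at hx
    exact (hTfin.mem_toFinset).mp ((Finset.mem_sort _).mp hx)
  have hZp_pos : ∀ x ∈ Zp, (0:ℝ) < x := fun x hx => (hZp_mem x hx).1
  have hZp_zero : ∀ x ∈ Zp, sumFn (2*n) μf af x = 0 := fun x hx => hWf x (hZp_mem x hx)
  -- the negative-side zero list
  set G := Finset.image p Finset.univ with hG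
  have hGcard : G.card = n := by
    rw [hG, Finset.card_image_of_injective _ hinj, Finset.card_univ, Fintype.card_fin]
  set Zm := G.sort (· ≤ ·) with hZm
  have hZm_len : Zm.length = n := by rw [hZm, Finset.length_sort, hGcard]
  have hZm_ch : Zm.IsChain (· < ·) :=
    List.isChain_iff_pairwise.mpr (Finset.sortedLT_sort G).pairwise
  have hZm_mem : ∀ x ∈ Zm, ∃ i : Fin n, p i = x := by
    intro x hx
    rw [hZm] at hx
    have := (Finset.mem_sort _).mp hx
    rw [hG] at this
    obtain ⟨i, _, hi⟩ := Finset.mem_image.mp this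
    exact ⟨i, hi⟩
  have hZm_pos : ∀ x ∈ Zm, (0:ℝ) < x := by
    intro x hx
    obtain ⟨i, hi⟩ := hZm_mem x hx
    rw [← hi]; exact hpos i
  have hZm_zero : ∀ x ∈ Zm, sumFn (2*n) μf bf x = 0 := by
    intro x hx
    obtain ⟨i, hi⟩ := hZm_mem x hx
    rw [← hi]; exact hzb i
  -- extract long alternating chains
  have hch1 : ∃ l : List ℕ, IsAlt af l ∧ (∀ x ∈ l, x < 2*n) ∧ n + 1 ≤ l.length := by
    by_contra h
    push_neg at h
    have := descartes (n-1) (2*n) μf af hμmono hafne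
      (fun l hl hlb => by have := h l hl hlb; omega) Zp hZp_ch hZp_pos hZp_zero
    omega
  have hch2 : ∃ l : List ℕ, IsAlt bf l ∧ (∀ x ∈ l, x < 2*n) ∧ n + 1 ≤ l.length := by
    by_contra h
    push_neg at h
    have := descartes (n-1) (2*n) μf bf hμmono hbfne
      (fun l hl hlb => by have := h l hl hlb; omega) Zm hZm_ch hZm_pos hZm_zero
    omega
  obtain ⟨l₁, hl₁, hb₁, hlen₁⟩ := hch1
  obtain ⟨l₂, hl₂, hb₂, hlen₂⟩ := hch2
  -- bf is the negation of the parity twist of af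
  have htwist : (fun k => (-1:ℝ)^k * af k) = fun k => -(bf k) := by
    funext k
    rw [haf, hbf]
    by_cases hk : k < n
    · simp only [if_pos hk]
      ring
    · simp only [if_neg hk]
      have hsgn : (-1:ℝ)^k = -(-1:ℝ)^(k-n) := by
        conv_lhs => rw [show k = (k - n) + n by omega]
        rw [pow_add, hn.neg_one_pow]
        ring
      rw [hsgn]
      ring
  have hl₂' : IsAlt (fun k => (-1:ℝ)^k * af k) l₂ := by
    rw [htwist]
    refine ⟨hl₂.1, ?_⟩
    refine chain'_imp_mem l₂ ?_ hl₂.2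
    intro x _ y _ hxy
    simpa using hxy
  have := two_chain (2*n) af l₁ l₂ hl₁ hl₂' hb₁ hb₂
  omega
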